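/- Let {w_t}_{t=0}^T and {w'_t}_{t=0}^T be sequences in ℝᵖ with w_0 = w'_0, w_{t+1} = w_t − η(∇ℓ(w_t) + ε_t), and w'_{t+1} = w'_t − η∇ℓ(w'_t), where η > 0 and ∇ℓ is β-Lipschitz. Then ‖w_T − w'_T‖ ≤ η‖Σ_{t=0}^{T−1} ε_t‖ + Σ_{s=0}^{T−2} η²β(1 + ηβ)^{T−2−s} ‖Σ_{t=0}^{s} ε_t‖. -/
import Mathlib


open RealInnerProductSpace

/-- Lemma C.3 of the paper: distance between an SGD path and the corresponding GD path. -/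
theorem stmt_4 {p : ℕ} (ℓ : EuclideanSpace ℝ (Fin p) → ℝ) (β η : ℝ) (hη : 0 < η)
    (hdiff : Differentiable ℝ ℓ)
    (hlip : ∀ a b : EuclideanSpace ℝ (Fin p),
      ‖gradient ℓ a - gradient ℓ b‖ ≤ β * ‖a - b‖)
    (T : ℕ) (w w' : ℕ → EuclideanSpace ℝ (Fin p)) (ε : ℕ → EuclideanSpace ℝ (Fin p))
    (h0 : w 0 = w' 0)
    (hw : ∀ t, w (t + 1) = w t - η • (gradient ℓ (w t) + ε t))
    (hw' : ∀ t, w' (t + 1) = w' t - η • gradient ℓ (w' t)) :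
    ‖w T - w' T‖ ≤ η * ‖∑ t ∈ Finset.range T, ε t‖
      + ∑ s ∈ Finset.range (T - 1),
          η ^ 2 * β * (1 + η * β) ^ (T - 2 - s) * ‖∑ t ∈ Finset.range (s + 1), ε t‖ := by
  rcases subsingleton_or_nontrivial (EuclideanSpace ℝ (Fin p)) with hsub | hnt
  · have hz : ∀ x : EuclideanSpace ℝ (Fin p), ‖x‖ = 0 := fun x => by
      rw [Subsingleton.elim x 0, norm_zero]
    simp [hz]
  · obtain ⟨a, b, hab⟩ := exists_pair_ne (EuclideanSpace ℝ (Fin p))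
    have hβ : 0 ≤ β := by
      have h1 : 0 < ‖a - b‖ := by
        rw [norm_pos_iff]; exact sub_ne_zero.mpr hab
      have h2 : (0:ℝ) * ‖a - b‖ ≤ β * ‖a - b‖ := by
        simpa using (norm_nonneg (gradient ℓ a - gradient ℓ b)).trans (hlip a b)
      exact le_of_mul_le_mul_right h2 h1
    have key : ∀ n, ‖w n - w' n + η • ∑ t ∈ Finset.range n, ε t‖ ≤
        ∑ s ∈ Finset.range (n - 1),
          η ^ 2 * β * (1 + η * β) ^ (n - 2 - s) * ‖∑ t ∈ Finset.range (s + 1), ε t‖ := by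
      intro n
      induction n with
      | zero => simp [h0]
      | succ m ih =>
        rcases m with _ | k
        · have hv1 : w 1 - w' 1 + η • ∑ t ∈ Finset.range 1, ε t = 0 := by
            rw [hw 0, hw' 0, h0, Finset.sum_range_one, smul_add]
            abel
          rw [hv1]
          simp
        · -- n = k + 2
          have ih' : ‖w (k+1) - w' (k+1) + η • ∑ t ∈ Finset.range (k+1), ε t‖ ≤
              ∑ s ∈ Finset.range k,
                η ^ 2 * β * (1 + η * β) ^ (k - 1 - s) * ‖∑ t ∈ Finset.range (s + 1), ε t‖ := ih
          have hv : w (k+2) - w' (k+2) + η • ∑ t ∈ Finset.range (k+2), ε t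
              = (w (k+1) - w' (k+1) + η • ∑ t ∈ Finset.range (k+1), ε t)
                - η • (gradient ℓ (w (k+1)) - gradient ℓ (w' (k+1))) := by
            rw [hw (k+1), hw' (k+1), Finset.sum_range_succ, smul_add, smul_add, smul_sub]
            abel
          have e1 : ‖w (k+2) - w' (k+2) + η • ∑ t ∈ Finset.range (k+2), ε t‖ ≤
              ‖w (k+1) - w' (k+1) + η • ∑ t ∈ Finset.range (k+1), ε t‖
                + η * ‖gradient ℓ (w (k+1)) - gradient ℓ (w' (k+1))‖ := by
            rw [hv]
            calc _ ≤ ‖w (k+1) - w' (k+1) + η • ∑ t ∈ Finset.range (k+1), ε t‖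
                + ‖η • (gradient ℓ (w (k+1)) - gradient ℓ (w' (k+1)))‖ := norm_sub_le _ _
              _ = _ := by rw [norm_smul, Real.norm_eq_abs, abs_of_pos hη]
          have e3 : ‖w (k+1) - w' (k+1)‖ ≤
              ‖w (k+1) - w' (k+1) + η • ∑ t ∈ Finset.range (k+1), ε t‖
                + η * ‖∑ t ∈ Finset.range (k+1), ε t‖ := by
            have h := norm_sub_le
              (w (k+1) - w' (k+1) + η • ∑ t ∈ Finset.range (k+1), ε t)
              (η • ∑ t ∈ Finset.range (k+1), ε t)
            rw [add_sub_cancel_right, norm_smul, Real.norm_eq_abs, abs_of_pos hη] at h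
            exact h
          have m1 : η * ‖gradient ℓ (w (k+1)) - gradient ℓ (w' (k+1))‖ ≤
              η * (β * ‖w (k+1) - w' (k+1)‖) :=
            mul_le_mul_of_nonneg_left (hlip _ _) hη.le
          have m2 : η * (β * ‖w (k+1) - w' (k+1)‖) ≤
              η * (β * (‖w (k+1) - w' (k+1) + η • ∑ t ∈ Finset.range (k+1), ε t‖
                + η * ‖∑ t ∈ Finset.range (k+1), ε t‖)) :=
            mul_le_mul_of_nonneg_left (mul_le_mul_of_nonneg_left e3 hβ) hη.le
          have hA : ‖w (k+2) - w' (k+2) + η • ∑ t ∈ Finset.range (k+2), ε t‖ ≤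
              (1 + η * β) * ‖w (k+1) - w' (k+1) + η • ∑ t ∈ Finset.range (k+1), ε t‖
                + η ^ 2 * β * ‖∑ t ∈ Finset.range (k+1), ε t‖ := by
            nlinarith [e1, m1, m2]
          have hsum : ∑ s ∈ Finset.range (k+1),
                η ^ 2 * β * (1 + η * β) ^ (k - s) * ‖∑ t ∈ Finset.range (s + 1), ε t‖
              = (1 + η * β) * ∑ s ∈ Finset.range k,
                  η ^ 2 * β * (1 + η * β) ^ (k - 1 - s) * ‖∑ t ∈ Finset.range (s + 1), ε t‖
                + η ^ 2 * β * ‖∑ t ∈ Finset.range (k+1), ε t‖ := by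
            rw [Finset.sum_range_succ, Finset.mul_sum]
            congr 1
            · apply Finset.sum_congr rfl
              intro s hs
              have hks : k - s = (k - 1 - s) + 1 := by
                have := Finset.mem_range.mp hs; omega
              rw [hks, pow_succ]
              ring
            · simp
          have m3 : (1 + η * β) * ‖w (k+1) - w' (k+1) + η • ∑ t ∈ Finset.range (k+1), ε t‖
              ≤ (1 + η * β) * ∑ s ∈ Finset.range k,
                  η ^ 2 * β * (1 + η * β) ^ (k - 1 - s) * ‖∑ t ∈ Finset.range (s + 1), ε t‖ :=
            mul_le_mul_of_nonneg_left ih' (by positivity)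
          show ‖w (k+2) - w' (k+2) + η • ∑ t ∈ Finset.range (k+2), ε t‖ ≤
              ∑ s ∈ Finset.range (k+1),
                η ^ 2 * β * (1 + η * β) ^ (k - s) * ‖∑ t ∈ Finset.range (s + 1), ε t‖
          rw [hsum]
          linarith [hA, m3]
    have hT := key T
    have hfin := norm_sub_le
      (w T - w' T + η • ∑ t ∈ Finset.range T, ε t) (η • ∑ t ∈ Finset.range T, ε t)
    rw [add_sub_cancel_right, norm_smul, Real.norm_eq_abs, abs_of_pos hη] at hfin
    linarith [hT, hfin]
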